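/- Let d ∈ {2,3}, s > 1, m ≥ 0, Ω ∈ ℝ, and γ_r > 0. Then there exists a constant C ≥ 0, depending only on Ω, γ_r, s, m and d, such that for every Schwartz function φ on ℝ^d with ‖φ‖_{L²} = 1: |Ω ∫_{ℝ^d} φ̄(x) L_z φ(x) dx| ≤ (γ_r²/2) ∫_{ℝ^d} |x|² |φ(x)|² dx + (1/4)(2π)^{-d} ∫_{ℝ^d} (|k|²+m²)^s |φ̂(k)|² dk + C. -/

import Mathlib

open MeasureTheory Real

noncomputable section

namespace Statement19

variable (d : ℕ)

/-- Fourier transform with the convention `φ̂(k) = ∫ φ(x) e^{-i k·x} dx`. -/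
def ft (φ : EuclideanSpace ℝ (Fin d) → ℂ) (k : EuclideanSpace ℝ (Fin d)) : ℂ :=
  ∫ x, φ x * Complex.exp (-(Complex.I * ((inner ℝ x k : ℝ) : ℂ)))

/-- The angular momentum operator `L_z = -i (x ∂_y - y ∂_x)`. -/
def Lz (h : 2 ≤ d) (φ : EuclideanSpace ℝ (Fin d) → ℂ) (x : EuclideanSpace ℝ (Fin d)) : ℂ :=
  -Complex.I * (((x ⟨0, by omega⟩ : ℝ) : ℂ) *
      fderiv ℝ φ x (EuclideanSpace.single ⟨1, by omega⟩ 1)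
    - ((x ⟨1, by omega⟩ : ℝ) : ℂ) *
      fderiv ℝ φ x (EuclideanSpace.single ⟨0, by omega⟩ 1))

/-! ### Auxiliary lemmas -/

open SchwartzMap Complex
open scoped FourierTransform

section Aux

variable {V : Type*} [NormedAddCommGroup V] [InnerProductSpace ℝ V] [MeasurableSpace V]
  [BorelSpace V] [FiniteDimensional ℝ V] [SecondCountableTopology V]

omit [MeasurableSpace V] [BorelSpace V] [FiniteDimensional ℝ V] [SecondCountableTopology V] in
lemma innerl_flip : (innerₗ V).flip = innerₗ V := by
  ext u v; exact real_inner_comm u v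

lemma myIntegral_ofReal {α : Type*} [MeasurableSpace α] {μ : Measure α} (g : α → ℝ) :
    (∫ x, ((g x : ℝ) : ℂ) ∂μ) = ((∫ x, g x ∂μ : ℝ) : ℂ) := integral_ofReal

lemma integrable_conj' {α : Type*} [MeasurableSpace α] {μ : Measure α} {g : α → ℂ}
    (h : Integrable g μ) : Integrable (fun x => (starRingEnd ℂ) (g x)) μ :=
  h.norm.mono' (continuous_star.comp_aestronglyMeasurable h.1)
    (Filter.Eventually.of_forall fun x => by simp)

lemma fourier_conj (g : V → ℂ) (w : V) :
    𝓕 (fun x => (starRingEnd ℂ) (g x)) w = (starRingEnd ℂ) (𝓕⁻ g w) := by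
  rw [Real.fourier_eq, Real.fourierInv_eq, ← integral_conj]
  congr 1
  ext v
  simp only [Circle.smul_def, Real.fourierChar_apply, smul_eq_mul, map_mul, ← Complex.exp_conj,
    Complex.conj_I, Complex.conj_ofReal]
  congr 2
  push_cast
  ring

lemma conj_norm_sq (z : ℂ) : z * (starRingEnd ℂ) z = ((‖z‖ ^ 2 : ℝ) : ℂ) := by
  rw [Complex.mul_conj]
  simp [Complex.normSq_eq_norm_sq]

/-- Parseval/Plancherel identity for Schwartz functions. -/
lemma parseval_schwartz (f : 𝓢(V, ℂ)) :
    ∫ ξ, ‖𝓕 (⇑f) ξ‖ ^ 2 = ∫ x, ‖f x‖ ^ 2 := by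
  set g : 𝓢(V, ℂ) := fourierTransformCLM ℂ f with hg
  have hgf : ⇑g = 𝓕 ⇑f := rfl
  have hginv : 𝓕⁻ (⇑g) = ⇑f := by
    rw [hgf]
    exact Continuous.fourierInv_fourier_eq f.continuous f.integrable g.integrable
  have hgc : Integrable (fun ξ => (starRingEnd ℂ) (g ξ)) volume := integrable_conj' g.integrable
  have key : ∫ ξ, (𝓕 (⇑f) ξ) * (starRingEnd ℂ) (g ξ)
      = ∫ x, f x * ((starRingEnd ℂ) (f x)) := by
    have h0 := VectorFourier.integral_fourierIntegral_smul_eq_flip (L := innerₗ V)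
      (μ := (volume : Measure V)) (ν := (volume : Measure V))
      (f := ⇑f) (g := fun ξ => (starRingEnd ℂ) (g ξ))
      Real.continuous_fourierChar (by exact continuous_inner) f.integrable hgc
    rw [innerl_flip] at h0
    have h2 : ∀ x, VectorFourier.fourierIntegral 𝐞 volume (innerₗ V)
        (fun ξ => (starRingEnd ℂ) (g ξ)) x = (starRingEnd ℂ) (f x) := by
      intro x
      have : VectorFourier.fourierIntegral 𝐞 volume (innerₗ V)
          (fun ξ => (starRingEnd ℂ) (g ξ)) x = 𝓕 (fun ξ => (starRingEnd ℂ) (g ξ)) x := rfl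
      rw [this, fourier_conj, hginv]
    simp only [smul_eq_mul, h2] at h0
    exact h0
  have lhs : ∫ ξ, (𝓕 (⇑f) ξ) * (starRingEnd ℂ) (g ξ) = ((∫ ξ, ‖𝓕 (⇑f) ξ‖ ^ 2 : ℝ) : ℂ) := by
    rw [← myIntegral_ofReal]
    congr 1; ext ξ
    rw [← hgf, conj_norm_sq, hgf]
  have rhs : ∫ x, f x * ((starRingEnd ℂ) (f x)) = ((∫ x, ‖f x‖ ^ 2 : ℝ) : ℂ) := by
    rw [← myIntegral_ofReal]
    congr 1; ext x
    rw [conj_norm_sq]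
  exact_mod_cast lhs.symm.trans (key.trans rhs)

lemma fourier_pderiv (f : 𝓢(V, ℂ)) (v : V) (ξ : V) :
    𝓕 (fun x => fderiv ℝ (⇑f) x v) ξ
      = (2 * π * Complex.I) * ((inner ℝ ξ v : ℝ) : ℂ) * 𝓕 (⇑f) ξ := by
  have hfd : Integrable (fderiv ℝ (⇑f)) volume := by
    have : (fderiv ℝ (⇑f)) = ⇑(SchwartzMap.fderivCLM ℝ V ℂ f) := by
      ext1 x; exact (SchwartzMap.fderivCLM_apply ℝ f x).symm
    rw [this]
    exact (SchwartzMap.fderivCLM ℝ V ℂ f).integrable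
  have h1 : 𝓕 (fun x => fderiv ℝ (⇑f) x v) ξ = (𝓕 (fderiv ℝ (⇑f)) ξ) v :=
    (Real.fourier_continuousLinearMap_apply hfd).symm
  rw [h1, Real.fourier_fderiv f.integrable f.differentiable hfd]
  simp only [VectorFourier.fourierSMulRight_apply, ContinuousLinearMap.neg_apply,
    innerSL_apply_apply ℝ, smul_smul, smul_eq_mul, real_smul, neg_smul]
  push_cast
  ring

lemma norm_sq_fourier_pderiv (f : 𝓢(V, ℂ)) (v : V) (ξ : V) :
    ‖𝓕 (fun x => fderiv ℝ (⇑f) x v) ξ‖ ^ 2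
      = (2 * π) ^ 2 * ((inner ℝ ξ v : ℝ)) ^ 2 * ‖𝓕 (⇑f) ξ‖ ^ 2 := by
  rw [fourier_pderiv]
  rw [norm_mul, norm_mul, mul_pow, mul_pow]
  have h1 : ‖(2 * ↑π * Complex.I : ℂ)‖ = 2 * π := by
    simp [norm_mul, _root_.abs_of_pos Real.pi_pos]
  have h2 : ‖((inner ℝ ξ v : ℝ) : ℂ)‖ ^ 2 = ((inner ℝ ξ v : ℝ)) ^ 2 := by
    rw [Complex.norm_real, Real.norm_eq_abs, _root_.sq_abs]
  rw [h1, h2]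

lemma integrable_pow_mul_sq (f : 𝓢(V, ℂ)) (k : ℕ) :
    Integrable (fun x => ‖x‖ ^ k * ‖f x‖ ^ 2) (volume : Measure V) := by
  set M := (SchwartzMap.seminorm ℝ 0 0) f with hM
  apply Integrable.mono' ((f.integrable_pow_mul volume k).const_mul M)
  · exact ((continuous_norm.pow k).mul ((f.continuous.norm).pow 2)).aestronglyMeasurable
  · filter_upwards with x
    have h1 : ‖f x‖ ≤ M := f.norm_le_seminorm ℝ x
    rw [Real.norm_eq_abs, _root_.abs_of_nonneg (by positivity)]
    calc ‖x‖ ^ k * ‖f x‖ ^ 2 = (‖x‖ ^ k * ‖f x‖) * ‖f x‖ := by ring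
    _ ≤ (‖x‖ ^ k * ‖f x‖) * M := by gcongr
    _ = M * (‖x‖ ^ k * ‖f x‖) := by ring

lemma integrable_sq (f : 𝓢(V, ℂ)) :
    Integrable (fun x => ‖f x‖ ^ 2) (volume : Measure V) := by
  simpa using integrable_pow_mul_sq f 0

lemma integrable_inner_sq (f : 𝓢(V, ℂ)) (v : V) :
    Integrable (fun x => ((inner ℝ x v : ℝ)) ^ 2 * ‖f x‖ ^ 2) (volume : Measure V) := by
  apply Integrable.mono' ((integrable_pow_mul_sq f 2).const_mul (‖v‖ ^ 2))
  · apply Continuous.aestronglyMeasurable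
    exact ((continuous_inner.comp (continuous_id.prodMk continuous_const)).pow 2).mul
      ((f.continuous.norm).pow 2)
  · filter_upwards with x
    rw [Real.norm_eq_abs, _root_.abs_of_nonneg (by positivity)]
    have h1 : ((inner ℝ x v : ℝ)) ^ 2 ≤ ‖x‖ ^ 2 * ‖v‖ ^ 2 := by
      calc ((inner ℝ x v : ℝ)) ^ 2 = |(inner ℝ x v : ℝ)| ^ 2 := (_root_.sq_abs _).symm
      _ ≤ (‖x‖ * ‖v‖) ^ 2 := by
          apply pow_le_pow_left₀ (abs_nonneg _) (abs_real_inner_le_norm x v)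
      _ = ‖x‖ ^ 2 * ‖v‖ ^ 2 := mul_pow _ _ _
    nlinarith [sq_nonneg (‖f x‖), sq_nonneg ‖x‖]

lemma integrable_rpow_weight (f : 𝓢(V, ℂ)) (a b s : ℝ) (ha : 0 ≤ a) (hb : 0 ≤ b)
    (hs : 0 < s) :
    Integrable (fun x => (a * ‖x‖ ^ 2 + b) ^ s * ‖f x‖ ^ 2) (volume : Measure V) := by
  set n := ⌈s⌉₊ with hn
  set M := (SchwartzMap.seminorm ℝ 0 0) f with hM
  have hMn : 0 ≤ M := apply_nonneg _ _
  set K : ℝ := (a + b + 1) ^ n * 2 ^ (2 * n) with hK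
  have hKn : 0 ≤ K := by positivity
  apply Integrable.mono'
    ((f.integrable.norm.add (f.integrable_pow_mul volume (2 * n))).const_mul (K * M))
  · apply Continuous.aestronglyMeasurable
    apply Continuous.mul ?_ ((f.continuous.norm).pow 2)
    apply Continuous.rpow_const
    · exact (continuous_const.mul (continuous_norm.pow 2)).add continuous_const
    · intro x; right; exact hs.le
  · filter_upwards with x
    set t : ℝ := a * ‖x‖ ^ 2 + b with htdef
    have ht0 : 0 ≤ t := by positivity
    set T : ℝ := (a + b + 1) * (1 + ‖x‖) ^ 2 with hTdef
    have hxn : 0 ≤ ‖x‖ := norm_nonneg x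
    have htT : t ≤ T := by nlinarith
    have hT1 : (1:ℝ) ≤ T := by nlinarith
    have h1 : t ^ s ≤ T ^ (n : ℝ) :=
      (Real.rpow_le_rpow ht0 htT hs.le).trans
        (Real.rpow_le_rpow_of_exponent_le hT1 (Nat.le_ceil s))
    have h2 : T ^ (n:ℝ) = T ^ n := Real.rpow_natCast T n
    have h3 : T ^ n ≤ K * (1 + ‖x‖ ^ (2 * n)) := by
      have e1 : T ^ n = (a + b + 1) ^ n * (1 + ‖x‖) ^ (2 * n) := by
        rw [hTdef, mul_pow, ← pow_mul]
      have e2 : (1 + ‖x‖) ^ (2 * n) ≤ 2 ^ (2 * n) * (1 + ‖x‖ ^ (2 * n)) := by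
        rcases le_total ‖x‖ 1 with hx | hx
        · have : (1 + ‖x‖) ^ (2*n) ≤ 2 ^ (2*n) := by
            apply pow_le_pow_left₀ (by positivity) (by linarith)
          nlinarith [pow_nonneg hxn (2*n), pow_nonneg (by norm_num : (0:ℝ) ≤ 2) (2*n)]
        · have h4 : (1 + ‖x‖) ^ (2*n) ≤ (2 * ‖x‖) ^ (2*n) := by
            apply pow_le_pow_left₀ (by positivity) (by linarith)
          rw [mul_pow] at h4
          nlinarith [pow_nonneg hxn (2*n), pow_nonneg (by norm_num : (0:ℝ) ≤ 2) (2*n)]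
      calc T ^ n = (a + b + 1) ^ n * (1 + ‖x‖) ^ (2 * n) := e1
      _ ≤ (a + b + 1) ^ n * (2 ^ (2 * n) * (1 + ‖x‖ ^ (2 * n))) := by
          gcongr
      _ = K * (1 + ‖x‖ ^ (2 * n)) := by rw [hK]; ring
    have hf2 : ‖f x‖ ^ 2 ≤ M * ‖f x‖ := by
      have := f.norm_le_seminorm ℝ x
      nlinarith [norm_nonneg (f x)]
    have hts : 0 ≤ t ^ s := Real.rpow_nonneg ht0 s
    rw [Real.norm_eq_abs, _root_.abs_of_nonneg (by positivity)]
    calc t ^ s * ‖f x‖ ^ 2 ≤ (K * (1 + ‖x‖ ^ (2 * n))) * ‖f x‖ ^ 2 := by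
          apply mul_le_mul_of_nonneg_right _ (sq_nonneg _)
          calc t ^ s ≤ T ^ (n:ℝ) := h1
          _ = T ^ n := h2
          _ ≤ K * (1 + ‖x‖ ^ (2*n)) := h3
    _ = K * ‖f x‖ ^ 2 + K * (‖x‖ ^ (2*n) * ‖f x‖ ^ 2) := by ring
    _ ≤ K * (M * ‖f x‖) + K * (‖x‖ ^ (2*n) * (M * ‖f x‖)) := by
        have hX : (0:ℝ) ≤ ‖x‖ ^ (2*n) := pow_nonneg hxn _
        have l2 : ‖x‖ ^ (2*n) * ‖f x‖ ^ 2 ≤ ‖x‖ ^ (2*n) * (M * ‖f x‖) :=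
          mul_le_mul_of_nonneg_left hf2 hX
        exact add_le_add (mul_le_mul_of_nonneg_left hf2 hKn) (mul_le_mul_of_nonneg_left l2 hKn)
    _ = K * M * (‖f x‖ + ‖x‖ ^ (2 * n) * ‖f x‖) := by ring

lemma exists_young (A s : ℝ) (hA : 0 ≤ A) (hs : 1 < s) :
    ∃ C : ℝ, 0 ≤ C ∧ ∀ t : ℝ, 0 ≤ t → A * t ≤ (1/4) * t ^ s + C := by
  set T := max 1 ((4*A) ^ (1/(s-1))) with hT
  have hT1 : (1:ℝ) ≤ T := le_max_left _ _
  refine ⟨A * T, by positivity, fun t ht => ?_⟩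
  rcases le_or_gt t T with h | h
  · have h0 : A * t ≤ A * T := by gcongr
    have h2 : 0 ≤ (1/4) * t ^ s := by positivity
    linarith
  · have ht1 : (1:ℝ) ≤ t := le_trans hT1 h.le
    have ht0 : (0:ℝ) < t := by linarith
    have key : 4 * A ≤ t ^ (s - 1) := by
      have h1 : (4*A) ^ (1/(s-1)) ≤ T := le_max_right _ _
      have h2 : ((4*A) ^ (1/(s-1))) ^ (s-1) ≤ t ^ (s-1) :=
        Real.rpow_le_rpow (Real.rpow_nonneg (by positivity) _) (h1.trans h.le) (by linarith)
      have h3 : ((4*A) ^ (1/(s-1))) ^ (s-1) = 4 * A := by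
        rw [← Real.rpow_mul (by positivity), one_div,
          inv_mul_cancel₀ (by linarith : s - 1 ≠ 0), Real.rpow_one]
      linarith
    have hsplit : t ^ s = t * t ^ (s-1) := by
      rw [show s = 1 + (s-1) by ring, Real.rpow_add ht0, Real.rpow_one]
      ring_nf
    have hmul : t * (4 * A) ≤ t * t ^ (s-1) :=
      mul_le_mul_of_nonneg_left key ht0.le
    have hAT : 0 ≤ A * T := by positivity
    rw [hsplit]
    nlinarith

lemma amgm_weighted (γ Ωa p b : ℝ) (hγ : 0 < γ) :
    Ωa * (p * b) ≤ γ ^ 2 / 2 * p ^ 2 + Ωa ^ 2 / (2 * γ ^ 2) * b ^ 2 := by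
  have e : 2 * γ ^ 2 * (γ ^ 2 / 2 * p ^ 2 + Ωa ^ 2 / (2 * γ ^ 2) * b ^ 2)
      = γ ^ 4 * p ^ 2 + Ωa ^ 2 * b ^ 2 := by
    field_simp
  refine le_of_mul_le_mul_left ?_ (show (0:ℝ) < 2 * γ ^ 2 by positivity)
  rw [e]
  nlinarith [sq_nonneg (γ ^ 2 * p - Ωa * b)]

end Aux

section Vd

variable {d : ℕ}

lemma coord_sq_le (x : EuclideanSpace ℝ (Fin d)) (i j : Fin d) (hij : i ≠ j) :
    (x i) ^ 2 + (x j) ^ 2 ≤ ‖x‖ ^ 2 := by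
  have hn : ‖x‖ ^ 2 = ∑ k, (x k) ^ 2 := by
    rw [EuclideanSpace.norm_eq, Real.sq_sqrt (by positivity)]
    congr 1; ext k
    rw [Real.norm_eq_abs, _root_.sq_abs]
  rw [hn]
  have h := Finset.sum_le_sum_of_subset_of_nonneg (Finset.subset_univ {i, j})
    (fun k _ _ => sq_nonneg (x k))
  rwa [Finset.sum_pair hij] at h

lemma ft_eq_fourier (φ : EuclideanSpace ℝ (Fin d) → ℂ) (k : EuclideanSpace ℝ (Fin d)) :
    ft d φ k = 𝓕 φ ((2 * π)⁻¹ • k) := by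
  rw [Real.fourier_eq']
  unfold ft
  congr 1
  ext x
  rw [smul_eq_mul, real_inner_smul_right, mul_comm]
  congr 1
  have h : -2 * π * ((2 * π)⁻¹ * (inner ℝ x k : ℝ)) = -(inner ℝ x k : ℝ) := by
    have hπ : (2:ℝ) * π ≠ 0 := by positivity
    field_simp
    try ring
  rw [h]
  push_cast
  ring_nf

lemma cov_ft (φ : EuclideanSpace ℝ (Fin d) → ℂ) (m s : ℝ) :
    ∫ k : EuclideanSpace ℝ (Fin d), (‖k‖ ^ 2 + m ^ 2) ^ s * ‖ft d φ k‖ ^ 2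
      = (2 * π) ^ d *
        ∫ u : EuclideanSpace ℝ (Fin d), ((2*π) ^ 2 * ‖u‖ ^ 2 + m ^ 2) ^ s * ‖𝓕 φ u‖ ^ 2 := by
  set F : EuclideanSpace ℝ (Fin d) → ℝ :=
    fun u => ((2*π) ^ 2 * ‖u‖ ^ 2 + m ^ 2) ^ s * ‖𝓕 φ u‖ ^ 2 with hF
  have hpt : ∀ k : EuclideanSpace ℝ (Fin d),
      (‖k‖ ^ 2 + m ^ 2) ^ s * ‖ft d φ k‖ ^ 2 = F ((2 * π)⁻¹ • k) := by
    intro k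
    have h1 : (2*π) ^ 2 * ‖(2 * π)⁻¹ • k‖ ^ 2 = ‖k‖ ^ 2 := by
      rw [norm_smul, Real.norm_eq_abs, abs_inv, _root_.abs_of_pos (by positivity : (0:ℝ) < 2*π)]
      rw [mul_pow]
      have hπ : ((2:ℝ) * π) ^ 2 ≠ 0 := by positivity
      field_simp
      try ring
    have h2 : F ((2 * π)⁻¹ • k)
        = ((2*π) ^ 2 * ‖(2 * π)⁻¹ • k‖ ^ 2 + m ^ 2) ^ s * ‖𝓕 φ ((2 * π)⁻¹ • k)‖ ^ 2 := rfl
    rw [ft_eq_fourier, h2, h1]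
  simp_rw [hpt]
  rw [MeasureTheory.Measure.integral_comp_inv_smul_of_nonneg volume F
    (by positivity : (0:ℝ) ≤ 2 * π)]
  rw [finrank_euclideanSpace_fin, smul_eq_mul]

end Vd

set_option maxHeartbeats 1000000 in
theorem statement19 (hd : d = 2 ∨ d = 3) (h2 : 2 ≤ d) (s m Ω γr : ℝ)
    (hs : 1 < s) (hm : 0 ≤ m) (hγ : 0 < γr) :
    ∃ C : ℝ, 0 ≤ C ∧ ∀ φ : SchwartzMap (EuclideanSpace ℝ (Fin d)) ℂ,
      (∫ x, ‖φ x‖ ^ 2) = 1 →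
      ‖((Ω : ℝ) : ℂ) * ∫ x, (starRingEnd ℂ) (φ x) * Lz d h2 (fun y => φ y) x‖
        ≤ γr ^ 2 / 2 * (∫ x, ‖x‖ ^ 2 * ‖φ x‖ ^ 2)
          + (1 / 4) * ((2 * π) ^ d)⁻¹ *
              (∫ k, (‖k‖ ^ 2 + m ^ 2) ^ s * ‖ft d (fun y => φ y) k‖ ^ 2)
          + C := by
  classical
  set A : ℝ := Ω ^ 2 / (2 * γr ^ 2) with hA
  have hA0 : 0 ≤ A := by positivity
  obtain ⟨C, hC0, hC⟩ := exists_young A s hA0 hs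
  refine ⟨C, hC0, fun φ hφ => ?_⟩
  set i0 : Fin d := ⟨0, by omega⟩ with hi0
  set i1 : Fin d := ⟨1, by omega⟩ with hi1
  have hij : i0 ≠ i1 := by
    simp [hi0, hi1, Fin.ext_iff]
  set u0 : EuclideanSpace ℝ (Fin d) := EuclideanSpace.single i0 (1:ℝ) with hu0
  set u1 : EuclideanSpace ℝ (Fin d) := EuclideanSpace.single i1 (1:ℝ) with hu1
  set g : 𝓢(EuclideanSpace ℝ (Fin d), ℂ) := SchwartzMap.fourierTransformCLM ℂ φ with hgdef
  have hg : ⇑g = 𝓕 ⇑φ := rfl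
  set D0 : EuclideanSpace ℝ (Fin d) → ℂ := fun x => fderiv ℝ (⇑φ) x u0 with hD0
  set D1 : EuclideanSpace ℝ (Fin d) → ℂ := fun x => fderiv ℝ (⇑φ) x u1 with hD1
  have hpD0 : ⇑(LineDeriv.lineDerivOp u0 φ) = D0 := by
    ext1 x; exact SchwartzMap.lineDerivOp_apply_eq_fderiv u0 φ x
  have hpD1 : ⇑(LineDeriv.lineDerivOp u1 φ) = D1 := by
    ext1 x; exact SchwartzMap.lineDerivOp_apply_eq_fderiv u1 φ x
  have hLz : ∀ x, Lz d h2 (fun y => φ y) x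
      = -Complex.I * (((x i0 : ℝ) : ℂ) * D1 x - ((x i1 : ℝ) : ℂ) * D0 x) := fun x => rfl
  -- integrabilities
  have Int1 : Integrable (fun x : EuclideanSpace ℝ (Fin d) => ‖x‖ ^ 2 * ‖φ x‖ ^ 2) volume :=
    integrable_pow_mul_sq φ 2
  have IntD0 : Integrable (fun x => ‖D0 x‖ ^ 2) volume := by
    rw [← hpD0]; exact integrable_sq _
  have IntD1 : Integrable (fun x => ‖D1 x‖ ^ 2) volume := by
    rw [← hpD1]; exact integrable_sq _
  -- Step A/B : bound LHS by integral of nice quantities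
  have stepAB : ‖((Ω : ℝ) : ℂ) * ∫ x, (starRingEnd ℂ) (φ x) * Lz d h2 (fun y => φ y) x‖
      ≤ ∫ x, (γr ^ 2 / 2 * (‖x‖ ^ 2 * ‖φ x‖ ^ 2) + (A * ‖D0 x‖ ^ 2 + A * ‖D1 x‖ ^ 2)) := by
    have e1 : ‖((Ω : ℝ) : ℂ) * ∫ x, (starRingEnd ℂ) (φ x) * Lz d h2 (fun y => φ y) x‖
        = |Ω| * ‖∫ x, (starRingEnd ℂ) (φ x) * Lz d h2 (fun y => φ y) x‖ := by
      rw [norm_mul, Complex.norm_real, Real.norm_eq_abs]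
    rw [e1]
    have e2 : |Ω| * ‖∫ x, (starRingEnd ℂ) (φ x) * Lz d h2 (fun y => φ y) x‖
        ≤ ∫ x, |Ω| * ‖(starRingEnd ℂ) (φ x) * Lz d h2 (fun y => φ y) x‖ := by
      rw [integral_const_mul]
      gcongr
      exact norm_integral_le_integral_norm _
    refine e2.trans (integral_mono_of_nonneg (Filter.Eventually.of_forall fun x => by positivity)
      ((Int1.const_mul _).add ((IntD0.const_mul A).add (IntD1.const_mul A))) ?_)
    filter_upwards with x
    have hnm : ‖(starRingEnd ℂ) (φ x) * Lz d h2 (fun y => φ y) x‖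
        = ‖φ x‖ * ‖Lz d h2 (fun y => φ y) x‖ := by
      rw [norm_mul, RCLike.norm_conj]
    have hLnorm : ‖Lz d h2 (fun y => φ y) x‖ ≤ |x i0| * ‖D1 x‖ + |x i1| * ‖D0 x‖ := by
      rw [hLz x, norm_mul]
      have : ‖(-Complex.I : ℂ)‖ = 1 := by simp
      rw [this, one_mul]
      refine (norm_sub_le _ _).trans ?_
      rw [norm_mul, norm_mul, Complex.norm_real, Complex.norm_real,
        Real.norm_eq_abs, Real.norm_eq_abs]
    have hsum : (x i0) ^ 2 + (x i1) ^ 2 ≤ ‖x‖ ^ 2 := coord_sq_le x i0 i1 hij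
    have G1 : |Ω| * ((|x i0| * ‖φ x‖) * ‖D1 x‖)
        ≤ γr ^ 2 / 2 * (|x i0| * ‖φ x‖) ^ 2 + A * ‖D1 x‖ ^ 2 := by
      have := amgm_weighted γr |Ω| (|x i0| * ‖φ x‖) (‖D1 x‖) hγ
      rwa [_root_.sq_abs] at this
    have G2 : |Ω| * ((|x i1| * ‖φ x‖) * ‖D0 x‖)
        ≤ γr ^ 2 / 2 * (|x i1| * ‖φ x‖) ^ 2 + A * ‖D0 x‖ ^ 2 := by
      have := amgm_weighted γr |Ω| (|x i1| * ‖φ x‖) (‖D0 x‖) hγ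
      rwa [_root_.sq_abs] at this
    have hq0 : (|x i0| * ‖φ x‖) ^ 2 = (x i0) ^ 2 * ‖φ x‖ ^ 2 := by
      rw [mul_pow, _root_.sq_abs]
    have hq1 : (|x i1| * ‖φ x‖) ^ 2 = (x i1) ^ 2 * ‖φ x‖ ^ 2 := by
      rw [mul_pow, _root_.sq_abs]
    rw [hnm]
    have step1 : |Ω| * (‖φ x‖ * ‖Lz d h2 (fun y => φ y) x‖)
        ≤ |Ω| * (‖φ x‖ * (|x i0| * ‖D1 x‖ + |x i1| * ‖D0 x‖)) := by
      have hΩn : (0:ℝ) ≤ |Ω| := abs_nonneg Ω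
      have hφn : (0:ℝ) ≤ ‖φ x‖ := norm_nonneg _
      exact mul_le_mul_of_nonneg_left (mul_le_mul_of_nonneg_left hLnorm hφn) hΩn
    refine step1.trans ?_
    have e3 : |Ω| * (‖φ x‖ * (|x i0| * ‖D1 x‖ + |x i1| * ‖D0 x‖))
        = |Ω| * ((|x i0| * ‖φ x‖) * ‖D1 x‖) + |Ω| * ((|x i1| * ‖φ x‖) * ‖D0 x‖) := by
      ring
    rw [e3]
    have hcoef : γr ^ 2 / 2 * ((x i0) ^ 2 * ‖φ x‖ ^ 2) + γr ^ 2 / 2 * ((x i1) ^ 2 * ‖φ x‖ ^ 2)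
        ≤ γr ^ 2 / 2 * (‖x‖ ^ 2 * ‖φ x‖ ^ 2) := by
      have hc0 : (0:ℝ) ≤ γr ^ 2 / 2 := by positivity
      have hmul : ((x i0) ^ 2 + (x i1) ^ 2) * ‖φ x‖ ^ 2 ≤ ‖x‖ ^ 2 * ‖φ x‖ ^ 2 :=
        mul_le_mul_of_nonneg_right hsum (sq_nonneg _)
      calc γr ^ 2 / 2 * ((x i0) ^ 2 * ‖φ x‖ ^ 2) + γr ^ 2 / 2 * ((x i1) ^ 2 * ‖φ x‖ ^ 2)
          = γr ^ 2 / 2 * (((x i0) ^ 2 + (x i1) ^ 2) * ‖φ x‖ ^ 2) := by ring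
      _ ≤ γr ^ 2 / 2 * (‖x‖ ^ 2 * ‖φ x‖ ^ 2) := mul_le_mul_of_nonneg_left hmul hc0
    calc |Ω| * ((|x i0| * ‖φ x‖) * ‖D1 x‖) + |Ω| * ((|x i1| * ‖φ x‖) * ‖D0 x‖)
        ≤ (γr ^ 2 / 2 * (|x i0| * ‖φ x‖) ^ 2 + A * ‖D1 x‖ ^ 2)
          + (γr ^ 2 / 2 * (|x i1| * ‖φ x‖) ^ 2 + A * ‖D0 x‖ ^ 2) := by
          exact add_le_add G1 G2
    _ = γr ^ 2 / 2 * ((x i0) ^ 2 * ‖φ x‖ ^ 2) + γr ^ 2 / 2 * ((x i1) ^ 2 * ‖φ x‖ ^ 2)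
          + (A * ‖D0 x‖ ^ 2 + A * ‖D1 x‖ ^ 2) := by
          rw [hq0, hq1]; ring
    _ ≤ γr ^ 2 / 2 * (‖x‖ ^ 2 * ‖φ x‖ ^ 2) + (A * ‖D0 x‖ ^ 2 + A * ‖D1 x‖ ^ 2) := by
          linarith
  -- Step C : split the integral
  have stepC : ∫ x, (γr ^ 2 / 2 * (‖x‖ ^ 2 * ‖φ x‖ ^ 2) + (A * ‖D0 x‖ ^ 2 + A * ‖D1 x‖ ^ 2))
      = γr ^ 2 / 2 * (∫ x, ‖x‖ ^ 2 * ‖φ x‖ ^ 2)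
        + (A * ∫ x, ‖D0 x‖ ^ 2) + (A * ∫ x, ‖D1 x‖ ^ 2) := by
    have J1 : Integrable (fun x : EuclideanSpace ℝ (Fin d) =>
        γr ^ 2 / 2 * (‖x‖ ^ 2 * ‖φ x‖ ^ 2)) volume := Int1.const_mul _
    have J2 : Integrable (fun x => A * ‖D0 x‖ ^ 2) volume := IntD0.const_mul A
    have J3 : Integrable (fun x => A * ‖D1 x‖ ^ 2) volume := IntD1.const_mul A
    have J23 : Integrable (fun x => A * ‖D0 x‖ ^ 2 + A * ‖D1 x‖ ^ 2) volume := J2.add J3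
    rw [integral_add J1 J23, integral_add J2 J3,
      integral_const_mul, integral_const_mul, integral_const_mul]
    ring
  -- Step D : Plancherel for the derivatives
  have stepD0 : ∫ x, ‖D0 x‖ ^ 2
      = ∫ ξ, (2 * π) ^ 2 * ((inner ℝ ξ u0 : ℝ)) ^ 2 * ‖𝓕 (⇑φ) ξ‖ ^ 2 := by
    have hp := parseval_schwartz (LineDeriv.lineDerivOp u0 φ)
    rw [hpD0] at hp
    rw [← hp]
    congr 1
    ext ξ
    rw [hD0]
    exact norm_sq_fourier_pderiv φ u0 ξ
  have stepD1 : ∫ x, ‖D1 x‖ ^ 2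
      = ∫ ξ, (2 * π) ^ 2 * ((inner ℝ ξ u1 : ℝ)) ^ 2 * ‖𝓕 (⇑φ) ξ‖ ^ 2 := by
    have hp := parseval_schwartz (LineDeriv.lineDerivOp u1 φ)
    rw [hpD1] at hp
    rw [← hp]
    congr 1
    ext ξ
    rw [hD1]
    exact norm_sq_fourier_pderiv φ u1 ξ
  -- Step E : Fourier-side bound
  have hW : Integrable
      (fun ξ : EuclideanSpace ℝ (Fin d) => ((2*π) ^ 2 * ‖ξ‖ ^ 2 + m ^ 2) ^ s * ‖g ξ‖ ^ 2)
      volume :=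
    integrable_rpow_weight g ((2*π) ^ 2) (m ^ 2) s (by positivity) (by positivity)
      (by linarith)
  have hparsg : ∫ ξ, ‖g ξ‖ ^ 2 = (1:ℝ) := by
    have := parseval_schwartz φ
    rw [← hg] at this
    rw [this, hφ]
  have stepE : (A * ∫ x, ‖D0 x‖ ^ 2) + (A * ∫ x, ‖D1 x‖ ^ 2)
      ≤ (1/4) * (∫ ξ, ((2*π) ^ 2 * ‖ξ‖ ^ 2 + m ^ 2) ^ s * ‖g ξ‖ ^ 2) + C := by
    rw [stepD0, stepD1]
    have hint0 : Integrable
        (fun ξ : EuclideanSpace ℝ (Fin d) =>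
          (2 * π) ^ 2 * ((inner ℝ ξ u0 : ℝ)) ^ 2 * ‖𝓕 (⇑φ) ξ‖ ^ 2) volume := by
      have := (integrable_inner_sq g u0).const_mul ((2*π)^2)
      rw [hg] at this
      simpa [mul_assoc] using this
    have hint1 : Integrable
        (fun ξ : EuclideanSpace ℝ (Fin d) =>
          (2 * π) ^ 2 * ((inner ℝ ξ u1 : ℝ)) ^ 2 * ‖𝓕 (⇑φ) ξ‖ ^ 2) volume := by
      have := (integrable_inner_sq g u1).const_mul ((2*π)^2)
      rw [hg] at this
      simpa [mul_assoc] using this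
    have e4 : (A * ∫ ξ, (2 * π) ^ 2 * ((inner ℝ ξ u0 : ℝ)) ^ 2 * ‖𝓕 (⇑φ) ξ‖ ^ 2)
        + (A * ∫ ξ, (2 * π) ^ 2 * ((inner ℝ ξ u1 : ℝ)) ^ 2 * ‖𝓕 (⇑φ) ξ‖ ^ 2)
        = ∫ ξ, (A * ((2 * π) ^ 2 * ((inner ℝ ξ u0 : ℝ)) ^ 2 * ‖𝓕 (⇑φ) ξ‖ ^ 2)
            + A * ((2 * π) ^ 2 * ((inner ℝ ξ u1 : ℝ)) ^ 2 * ‖𝓕 (⇑φ) ξ‖ ^ 2)) := by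
      have K0 : Integrable (fun ξ : EuclideanSpace ℝ (Fin d) =>
          A * ((2 * π) ^ 2 * ((inner ℝ ξ u0 : ℝ)) ^ 2 * ‖𝓕 (⇑φ) ξ‖ ^ 2)) volume :=
        hint0.const_mul A
      have K1 : Integrable (fun ξ : EuclideanSpace ℝ (Fin d) =>
          A * ((2 * π) ^ 2 * ((inner ℝ ξ u1 : ℝ)) ^ 2 * ‖𝓕 (⇑φ) ξ‖ ^ 2)) volume :=
        hint1.const_mul A
      rw [integral_add K0 K1, integral_const_mul, integral_const_mul]
    rw [e4]
    have hTop : Integrable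
        (fun ξ : EuclideanSpace ℝ (Fin d) =>
          (1/4) * (((2*π) ^ 2 * ‖ξ‖ ^ 2 + m ^ 2) ^ s * ‖g ξ‖ ^ 2) + C * ‖g ξ‖ ^ 2) volume :=
      (hW.const_mul _).add ((integrable_sq g).const_mul C)
    have mono : ∫ ξ, (A * ((2 * π) ^ 2 * ((inner ℝ ξ u0 : ℝ)) ^ 2 * ‖𝓕 (⇑φ) ξ‖ ^ 2)
            + A * ((2 * π) ^ 2 * ((inner ℝ ξ u1 : ℝ)) ^ 2 * ‖𝓕 (⇑φ) ξ‖ ^ 2))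
        ≤ ∫ ξ, ((1/4) * (((2*π) ^ 2 * ‖ξ‖ ^ 2 + m ^ 2) ^ s * ‖g ξ‖ ^ 2) + C * ‖g ξ‖ ^ 2) := by
      refine integral_mono_of_nonneg (Filter.Eventually.of_forall fun ξ => by positivity)
        hTop ?_
      filter_upwards with ξ
      set t : ℝ := (2*π) ^ 2 * ‖ξ‖ ^ 2 + m ^ 2 with htdef
      have ht0 : 0 ≤ t := by positivity
      have key := hC t ht0
      have hb : ((inner ℝ ξ u0 : ℝ)) ^ 2 + ((inner ℝ ξ u1 : ℝ)) ^ 2 ≤ ‖ξ‖ ^ 2 := by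
        have e0 : (inner ℝ ξ u0 : ℝ) = ξ i0 := by
          rw [hu0, EuclideanSpace.inner_single_right]
          simp
        have e1 : (inner ℝ ξ u1 : ℝ) = ξ i1 := by
          rw [hu1, EuclideanSpace.inner_single_right]
          simp
        rw [e0, e1]
        exact coord_sq_le ξ i0 i1 hij
      have hgξ : ‖𝓕 (⇑φ) ξ‖ ^ 2 = ‖g ξ‖ ^ 2 := by rw [hg]
      rw [hgξ]
      have hstep : A * ((2*π) ^ 2 * (((inner ℝ ξ u0 : ℝ)) ^ 2 + ((inner ℝ ξ u1 : ℝ)) ^ 2))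
          ≤ A * t := by
        have h5 : (2*π) ^ 2 * (((inner ℝ ξ u0 : ℝ)) ^ 2 + ((inner ℝ ξ u1 : ℝ)) ^ 2)
            ≤ (2*π) ^ 2 * ‖ξ‖ ^ 2 :=
          mul_le_mul_of_nonneg_left hb (by positivity)
        have h6 : (2*π) ^ 2 * ‖ξ‖ ^ 2 ≤ t := by
          rw [htdef]; nlinarith [sq_nonneg m]
        have := h5.trans h6
        exact mul_le_mul_of_nonneg_left this hA0
      have hg0 : (0:ℝ) ≤ ‖g ξ‖ ^ 2 := sq_nonneg _
      calc A * ((2 * π) ^ 2 * ((inner ℝ ξ u0 : ℝ)) ^ 2 * ‖g ξ‖ ^ 2)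
            + A * ((2 * π) ^ 2 * ((inner ℝ ξ u1 : ℝ)) ^ 2 * ‖g ξ‖ ^ 2)
          = (A * ((2*π) ^ 2 * (((inner ℝ ξ u0 : ℝ)) ^ 2 + ((inner ℝ ξ u1 : ℝ)) ^ 2))) * ‖g ξ‖ ^ 2 := by
            ring
      _ ≤ (A * t) * ‖g ξ‖ ^ 2 := mul_le_mul_of_nonneg_right hstep hg0
      _ ≤ ((1/4) * t ^ s + C) * ‖g ξ‖ ^ 2 := mul_le_mul_of_nonneg_right key hg0
      _ = (1/4) * (t ^ s * ‖g ξ‖ ^ 2) + C * ‖g ξ‖ ^ 2 := by ring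
    refine mono.trans ?_
    have L1 : Integrable (fun ξ : EuclideanSpace ℝ (Fin d) =>
        (1/4) * (((2*π) ^ 2 * ‖ξ‖ ^ 2 + m ^ 2) ^ s * ‖g ξ‖ ^ 2)) volume := hW.const_mul _
    have L2 : Integrable (fun ξ : EuclideanSpace ℝ (Fin d) => C * ‖g ξ‖ ^ 2) volume :=
      (integrable_sq g).const_mul C
    rw [integral_add L1 L2, integral_const_mul, integral_const_mul, hparsg]
    simp
  -- change of variables for the ft integral
  have hcov : (1/4) * ((2 * π) ^ d)⁻¹ *
      (∫ k, (‖k‖ ^ 2 + m ^ 2) ^ s * ‖ft d (fun y => φ y) k‖ ^ 2)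
      = (1/4) * (∫ ξ, ((2*π) ^ 2 * ‖ξ‖ ^ 2 + m ^ 2) ^ s * ‖g ξ‖ ^ 2) := by
    have := cov_ft (fun y => φ y) m s
    rw [this]
    have hgg : (fun u : EuclideanSpace ℝ (Fin d) =>
        ((2*π) ^ 2 * ‖u‖ ^ 2 + m ^ 2) ^ s * ‖𝓕 (fun y => φ y) u‖ ^ 2)
        = fun u => ((2*π) ^ 2 * ‖u‖ ^ 2 + m ^ 2) ^ s * ‖g u‖ ^ 2 := rfl
    rw [hgg]
    have hne : ((2:ℝ) * π) ^ d ≠ 0 := by positivity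
    field_simp
  -- assemble
  calc ‖((Ω : ℝ) : ℂ) * ∫ x, (starRingEnd ℂ) (φ x) * Lz d h2 (fun y => φ y) x‖
      ≤ ∫ x, (γr ^ 2 / 2 * (‖x‖ ^ 2 * ‖φ x‖ ^ 2) + (A * ‖D0 x‖ ^ 2 + A * ‖D1 x‖ ^ 2)) :=
        stepAB
  _ = γr ^ 2 / 2 * (∫ x, ‖x‖ ^ 2 * ‖φ x‖ ^ 2)
        + (A * ∫ x, ‖D0 x‖ ^ 2) + (A * ∫ x, ‖D1 x‖ ^ 2) := stepC
  _ ≤ γr ^ 2 / 2 * (∫ x, ‖x‖ ^ 2 * ‖φ x‖ ^ 2)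
        + ((1/4) * (∫ ξ, ((2*π) ^ 2 * ‖ξ‖ ^ 2 + m ^ 2) ^ s * ‖g ξ‖ ^ 2) + C) := by
        have := stepE
        linarith
  _ = γr ^ 2 / 2 * (∫ x, ‖x‖ ^ 2 * ‖φ x‖ ^ 2)
        + (1 / 4) * ((2 * π) ^ d)⁻¹ *
            (∫ k, (‖k‖ ^ 2 + m ^ 2) ^ s * ‖ft d (fun y => φ y) k‖ ^ 2)
        + C := by
        rw [hcov]
        ring

end Statement19
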